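/- Let T be a binary decision tree over ℝ^d with classes {1,…,c}, let x̃ ∈ ℝ^d, and let ε ≥ 0 be strictly smaller than the margin of x̃ at T. Then the function y ↦ eval(T, y) is constant on the closed ℓ∞-ball of radius ε centered at x̃: for every y with ‖y − x̃‖_∞ ≤ ε, eval(T, y) = eval(T, x̃). -/
import Mathlib


open scoped Classical

/-- A binary decision tree over `ℝ^d` with classes `{1,…,c}` (encoded as `Fin c`):
either a leaf labeled by a class, or an internal node carrying a feature index,
a threshold, and two subtrees. -/
inductive DTree (d c : ℕ) : Type where
  | leaf (k : Fin c) : DTree d c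
  | node (j : Fin d) (t : ℝ) (L R : DTree d c) : DTree d c

namespace DTree

variable {d c : ℕ}

/-- Evaluation of a decision tree at a point `x : ℝ^d`. -/
noncomputable def eval : DTree d c → (Fin d → ℝ) → Fin c
  | leaf k, _ => k
  | node j t L R, x => if x j < t then L.eval x else R.eval x

/-- The path of `x` through the tree: the sequence of internal nodes
(feature index, threshold) visited during evaluation. -/
noncomputable def path : DTree d c → (Fin d → ℝ) → List (Fin d × ℝ)
  | leaf _, _ => []
  | node j t L R, x => (j, t) :: (if x j < t then L.path x else R.path x)

/-- The position (sequence of left/right choices) of the leaf reached by `x`. -/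
noncomputable def leafPos : DTree d c → (Fin d → ℝ) → List Bool
  | leaf _, _ => []
  | node j t L R, x =>
      if x j < t then false :: L.leafPos x else true :: R.leafPos x

/-- The margin of `x̃` at the tree: the minimum of `|t - x̃ j|` over internal
nodes `(j, t)` on the path of `x̃`, and `+∞` for a single leaf. -/
noncomputable def margin : DTree d c → (Fin d → ℝ) → EReal
  | leaf _, _ => ⊤
  | node j t L R, x =>
      min (↑|t - x j|) (if x j < t then L.margin x else R.margin x)

/-- The set of leaves of the tree, identified with root-to-leaf positions. -/
def leaves : DTree d c → Finset (List Bool)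
  | leaf _ => {[]}
  | node _ _ L R => (L.leaves.image (false :: ·)) ∪ (R.leaves.image (true :: ·))

/-- The class label of the leaf at a given root-to-leaf position, if it exists. -/
def labelAt : DTree d c → List Bool → Option (Fin c)
  | leaf k, [] => some k
  | node _ _ L _, false :: p => L.labelAt p
  | node _ _ _ R, true :: p => R.labelAt p
  | _, _ => none

end DTree

/-- If `0 ≤ ε` is strictly smaller than the margin of `x'` at the tree `T`,
then `y ↦ eval T y` is constant on the closed ℓ∞-ball of radius `ε` centered at
`x'` (the sup norm on `Fin d → ℝ` is the ℓ∞ norm). -/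
theorem DTree.eval_const_on_ball {d c : ℕ} (T : DTree d c) (x' : Fin d → ℝ)
    (ε : ℝ) (hε : 0 ≤ ε) (hmargin : (ε : EReal) < T.margin x') :
    ∀ y : Fin d → ℝ, ‖y - x'‖ ≤ ε → T.eval y = T.eval x' := by
  induction T with
  | leaf k => intro y _; rfl
  | node j t L R ihL ihR =>
    intro y hy
    have hcoord : |y j - x' j| ≤ ε := by
      calc |y j - x' j| = ‖(y - x') j‖ := by simp [Real.norm_eq_abs]
        _ ≤ ‖y - x'‖ := norm_le_pi_norm _ j
        _ ≤ ε := hy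
    simp only [margin, lt_min_iff] at hmargin
    obtain ⟨h1, h2⟩ := hmargin
    have h1' : ε < |t - x' j| := by exact_mod_cast h1
    have hsame : y j < t ↔ x' j < t := by
      rcases lt_or_ge (x' j) t with h | h
      · constructor
        · intro _; exact h
        · intro _
          have : ε < t - x' j := by rwa [abs_of_pos (by linarith)] at h1'
          have := abs_le.mp hcoord; linarith [this.2]
      · constructor
        · intro hy'
          have : ε < x' j - t := by
            rwa [abs_of_nonpos (by linarith), neg_sub] at h1'
          have := abs_le.mp hcoord; linarith [this.1]
        · intro h'; linarith
    by_cases hx : x' j < t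
    · have hyj : y j < t := hsame.mpr hx
      simp only [eval, if_pos hx, if_pos hyj]
      rw [if_pos hx] at h2
      exact ihL h2 y hy
    · have hyj : ¬ y j < t := fun h => hx (hsame.mp h)
      simp only [eval, if_neg hx, if_neg hyj]
      rw [if_neg hx] at h2
      exact ihR h2 y hy
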